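/- The decomposition identity for the 2n-gon parity sum: with R and S defined as below, R(G{1,2,…,2n}) = R(G{3,4,…,2n}) + Σ_{j=2}^{n} S(G{1,2,2j−1,2j}) − 1/r₁₂^α, where S(G{i₁,i₂,i₃,i₄}) = 1/r_{i₁i₃}^α + 1/r_{i₂i₄}^α − 1/r_{i₂i₃}^α − 1/r_{i₁i₄}^α. -/
import Mathlib

noncomputable def hh (α : ℝ) (r : ℕ → ℕ → ℝ) (p s : ℕ) : ℝ :=
  if p < s then (if p % 2 = s % 2 then r p s ^ (-α) else -(r p s ^ (-α))) else 0

lemma diff_eq (α : ℝ) (r : ℕ → ℕ → ℝ) (A : Finset ℕ) :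
    ((∑ q ∈ (A ×ˢ A).filter (fun q => q.1 < q.2 ∧ q.1 % 2 = q.2 % 2), r q.1 q.2 ^ (-α)) -
      ∑ q ∈ (A ×ˢ A).filter (fun q => q.1 < q.2 ∧ q.1 % 2 ≠ q.2 % 2), r q.1 q.2 ^ (-α))
    = ∑ p ∈ A, ∑ s ∈ A, hh α r p s := by
  rw [Finset.sum_filter, Finset.sum_filter, ← Finset.sum_sub_distrib,
    ← Finset.sum_product']
  apply Finset.sum_congr rfl
  intro q _
  unfold hh
  split_ifs with h1 h2 <;> simp_all <;> ring

lemma pair_sum (f : ℕ → ℝ) : ∀ n : ℕ,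
    ∑ s ∈ Finset.Icc 3 (2 * n), f s = ∑ j ∈ Finset.Icc 2 n, (f (2 * j - 1) + f (2 * j)) := by
  intro n
  induction n with
  | zero => simp
  | succ m ih =>
    rcases Nat.eq_zero_or_pos m with h | h
    · subst h
      have : Finset.Icc 3 2 = (∅ : Finset ℕ) := by decide
      simp [this]
    · have h1 : 3 ≤ 2 * m + 1 := by omega
      have h2 : 3 ≤ 2 * m + 1 + 1 := by omega
      have h3 : 2 ≤ m + 1 := by omega
      rw [show 2 * (m + 1) = 2 * m + 1 + 1 by ring, Finset.sum_Icc_succ_top h2,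
        Finset.sum_Icc_succ_top h1, ih, Finset.sum_Icc_succ_top h3]
      have e1 : 2 * (m + 1) - 1 = 2 * m + 1 := by omega
      have e2 : 2 * (m + 1) = 2 * m + 1 + 1 := by omega
      rw [e1, e2]; ring

theorem stmt_10 (n : ℕ) (hn : 2 ≤ n) (α : ℝ) (hα : 0 < α) (r : ℕ → ℕ → ℝ)
    (hsymm : ∀ p s, r p s = r s p) (hpos : ∀ p s, p ≠ s → 0 < r p s) :
    ((∑ q ∈ ((Finset.Icc 1 (2 * n)) ×ˢ (Finset.Icc 1 (2 * n))).filter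
        (fun q => q.1 < q.2 ∧ q.1 % 2 = q.2 % 2), r q.1 q.2 ^ (-α)) -
      ∑ q ∈ ((Finset.Icc 1 (2 * n)) ×ˢ (Finset.Icc 1 (2 * n))).filter
        (fun q => q.1 < q.2 ∧ q.1 % 2 ≠ q.2 % 2), r q.1 q.2 ^ (-α)) =
    (((∑ q ∈ ((Finset.Icc 3 (2 * n)) ×ˢ (Finset.Icc 3 (2 * n))).filter
        (fun q => q.1 < q.2 ∧ q.1 % 2 = q.2 % 2), r q.1 q.2 ^ (-α)) -
      ∑ q ∈ ((Finset.Icc 3 (2 * n)) ×ˢ (Finset.Icc 3 (2 * n))).filter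
        (fun q => q.1 < q.2 ∧ q.1 % 2 ≠ q.2 % 2), r q.1 q.2 ^ (-α)) +
      ∑ j ∈ Finset.Icc 2 n,
        (r 1 (2 * j - 1) ^ (-α) + r 2 (2 * j) ^ (-α) -
          r 2 (2 * j - 1) ^ (-α) - r 1 (2 * j) ^ (-α))) -
      r 1 2 ^ (-α) := by
  rw [diff_eq, diff_eq]
  -- split Icc 1 (2n) into {1,2} ∪ Icc 3 (2n)
  have hset : Finset.Icc 1 (2 * n) = insert 1 (insert 2 (Finset.Icc 3 (2 * n))) := by
    ext x
    simp only [Finset.mem_Icc, Finset.mem_insert]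
    omega
  have h1m : (1 : ℕ) ∉ insert 2 (Finset.Icc 3 (2 * n)) := by
    simp [Finset.mem_Icc]
  have h2m : (2 : ℕ) ∉ Finset.Icc 3 (2 * n) := by simp
  -- inner sums for p ≥ 3 : s = 1, 2 contribute 0
  have hinner : ∀ p ∈ Finset.Icc 3 (2 * n),
      ∑ s ∈ insert 1 (insert 2 (Finset.Icc 3 (2 * n))), hh α r p s
        = ∑ s ∈ Finset.Icc 3 (2 * n), hh α r p s := by
    intro p hp
    rw [Finset.mem_Icc] at hp
    rw [Finset.sum_insert h1m, Finset.sum_insert h2m]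
    have z1 : hh α r p 1 = 0 := by unfold hh; rw [if_neg (by omega)]
    have z2 : hh α r p 2 = 0 := by unfold hh; rw [if_neg (by omega)]
    rw [z1, z2]; ring
  conv_lhs => rw [hset, Finset.sum_insert h1m, Finset.sum_insert h2m]
  rw [Finset.sum_congr rfl hinner]
  -- rows p = 1 and p = 2
  have row1 : ∑ s ∈ insert 1 (insert 2 (Finset.Icc 3 (2 * n))), hh α r 1 s =
      -(r 1 2 ^ (-α)) + ∑ s ∈ Finset.Icc 3 (2 * n), hh α r 1 s := by
    rw [Finset.sum_insert h1m, Finset.sum_insert h2m]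
    have z1 : hh α r 1 1 = 0 := by unfold hh; rw [if_neg (by omega)]
    have z2 : hh α r 1 2 = -(r 1 2 ^ (-α)) := by
      unfold hh; rw [if_pos (by omega), if_neg (by omega)]
    rw [z1, z2]; ring
  have row2 : ∑ s ∈ insert 1 (insert 2 (Finset.Icc 3 (2 * n))), hh α r 2 s =
      ∑ s ∈ Finset.Icc 3 (2 * n), hh α r 2 s := by
    rw [Finset.sum_insert h1m, Finset.sum_insert h2m]
    have z1 : hh α r 2 1 = 0 := by unfold hh; rw [if_neg (by omega)]
    have z2 : hh α r 2 2 = 0 := by unfold hh; rw [if_neg (by omega)]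
    rw [z1, z2]; ring
  rw [row1, row2]
  rw [pair_sum (fun s => hh α r 1 s), pair_sum (fun s => hh α r 2 s)]
  have key : (∑ j ∈ Finset.Icc 2 n, (hh α r 1 (2 * j - 1) + hh α r 1 (2 * j))) +
        ∑ j ∈ Finset.Icc 2 n, (hh α r 2 (2 * j - 1) + hh α r 2 (2 * j))
      = ∑ j ∈ Finset.Icc 2 n,
        (r 1 (2 * j - 1) ^ (-α) + r 2 (2 * j) ^ (-α) -
          r 2 (2 * j - 1) ^ (-α) - r 1 (2 * j) ^ (-α)) := by
    rw [← Finset.sum_add_distrib]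
    apply Finset.sum_congr rfl
    intro j hj
    rw [Finset.mem_Icc] at hj
    have e1 : hh α r 1 (2 * j - 1) = r 1 (2 * j - 1) ^ (-α) := by
      unfold hh; rw [if_pos (by omega), if_pos (by omega)]
    have e2 : hh α r 1 (2 * j) = -(r 1 (2 * j) ^ (-α)) := by
      unfold hh; rw [if_pos (by omega), if_neg (by omega)]
    have e3 : hh α r 2 (2 * j - 1) = -(r 2 (2 * j - 1) ^ (-α)) := by
      unfold hh; rw [if_pos (by omega), if_neg (by omega)]
    have e4 : hh α r 2 (2 * j) = r 2 (2 * j) ^ (-α) := by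
      unfold hh; rw [if_pos (by omega), if_pos (by omega)]
    rw [e1, e2, e3, e4]; ring
  linarith [key]
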